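/- arXiv:1806.07931 — 4 statements merged into one kernel-verified Lean document; each statement's English description precedes it below -/
import Mathlib

section
/- Let X ⊆ R^n be a convex set and f : X → R a radially lower semicontinuous function which is pseudoconvex with respect to the lower Dini derivative. Then f is strictly pseudoconvex if and only if f is radially nonconstant, i.e., there is no nondegenerate line segment in X on which f is constant. -/
open Filter Set

/-- Lower Dini directional derivative of a function of one real variable. -/
noncomputable def dini (φ : ℝ → ℝ) (s u : ℝ) : ℝ :=
  liminf (fun h : ℝ => (φ (s + h * u) - φ s) / h) (nhdsWithin 0 (Ioi 0))

/-- Pseudoconvexity w.r.t. the lower Dini derivative, one variable. -/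
def PseudoconvexOn (φ : ℝ → ℝ) (I : Set ℝ) : Prop :=
  ∀ s ∈ I, ∀ t ∈ I, φ t < φ s → dini φ s (t - s) < 0

/-- A direction `u` is admissible at `s` relative to `I`. -/
def Admissible (I : Set ℝ) (s u : ℝ) : Prop :=
  ∃ δ > 0, ∀ h ∈ Ioo (0:ℝ) δ, s + h * u ∈ I

/-- `s` is a stationary point of `φ` relative to `I`. -/
def Stationary (φ : ℝ → ℝ) (I : Set ℝ) (s : ℝ) : Prop :=
  ∀ u : ℝ, Admissible I s u → 0 ≤ dini φ s u

/-- Lower Dini directional derivative of `f : ℝⁿ → ℝ` at `x` in direction `u`. -/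
noncomputable def diniV {n : ℕ} (f : (Fin n → ℝ) → ℝ) (x u : Fin n → ℝ) : ℝ :=
  liminf (fun h : ℝ => (f (x + h • u) - f x) / h) (nhdsWithin 0 (Ioi 0))

/-- Pseudoconvexity of `f` on `X ⊆ ℝⁿ` w.r.t. the lower Dini derivative. -/
def PseudoconvexOnV {n : ℕ} (f : (Fin n → ℝ) → ℝ) (X : Set (Fin n → ℝ)) : Prop :=
  ∀ x ∈ X, ∀ y ∈ X, f y < f x → diniV f x (y - x) < 0

/-- A direction `u` is admissible at `x` relative to `X`. -/
def AdmissibleV {n : ℕ} (X : Set (Fin n → ℝ)) (x u : Fin n → ℝ) : Prop :=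
  ∃ δ > 0, ∀ h ∈ Ioo (0:ℝ) δ, x + h • u ∈ X

/-- `x` is a stationary point of `f` relative to `X`. -/
def StationaryV {n : ℕ} (f : (Fin n → ℝ) → ℝ) (X : Set (Fin n → ℝ)) (x : Fin n → ℝ) : Prop :=
  ∀ u : Fin n → ℝ, AdmissibleV X x u → 0 ≤ diniV f x u

/-- `f` is radially lower semicontinuous on `X`: lsc on every segment. -/
def RadiallyLSC {n : ℕ} (f : (Fin n → ℝ) → ℝ) (X : Set (Fin n → ℝ)) : Prop :=
  ∀ x ∈ X, ∀ y ∈ X,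
    LowerSemicontinuousOn (fun t : ℝ => f (x + t • (y - x))) (Icc 0 1)

/-- `f` is radially upper semicontinuous on `X`: usc on every segment. -/
def RadiallyUSC {n : ℕ} (f : (Fin n → ℝ) → ℝ) (X : Set (Fin n → ℝ)) : Prop :=
  ∀ x ∈ X, ∀ y ∈ X,
    UpperSemicontinuousOn (fun t : ℝ => f (x + t • (y - x))) (Icc 0 1)

/-- `f` is quasiconvex on `X`. -/
def QuasiconvexOnSeg {n : ℕ} (f : (Fin n → ℝ) → ℝ) (X : Set (Fin n → ℝ)) : Prop :=
  ∀ x ∈ X, ∀ y ∈ X, ∀ t ∈ Icc (0:ℝ) 1, f (x + t • (y - x)) ≤ max (f x) (f y)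

/-- `f` is semistrictly quasiconvex on `X`. -/
def SemistrictlyQuasiconvexOn {n : ℕ} (f : (Fin n → ℝ) → ℝ) (X : Set (Fin n → ℝ)) : Prop :=
  ∀ x ∈ X, ∀ y ∈ X, f y < f x → ∀ t ∈ Ioo (0:ℝ) 1, f (x + t • (y - x)) < f x

/-- Strict pseudoconvexity of `f` on `X` w.r.t. the lower Dini derivative. -/
def StrictPseudoconvexOnV {n : ℕ} (f : (Fin n → ℝ) → ℝ) (X : Set (Fin n → ℝ)) : Prop :=
  ∀ x ∈ X, ∀ y ∈ X, x ≠ y → f y ≤ f x → diniV f x (y - x) < 0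


lemma frequently_neg_of_liminf_neg {u : ℝ → ℝ} {l : Filter ℝ}
    (h : liminf u l < 0) : ∃ᶠ x in l, u x < 0 := by
  by_cases hb : l.IsCoboundedUnder (· ≥ ·) u
  · exact frequently_lt_of_liminf_lt hb h
  · exfalso
    have h0 : liminf u l = 0 := by
      rw [liminf_eq]
      apply Real.sSup_of_not_bddAbove
      intro hbdd
      obtain ⟨b, hb'⟩ := hbdd
      exact hb ⟨b, fun a ha => hb' (by simpa [eventually_map] using ha)⟩
    rw [h0] at h
    exact lt_irrefl _ h

lemma map_const_mul_nhdsGT {c : ℝ} (hc : 0 < c) :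
    Filter.map (fun h : ℝ => c * h) (nhdsWithin 0 (Ioi 0)) = nhdsWithin 0 (Ioi 0) := by
  have key : ∀ d : ℝ, 0 < d → Tendsto (fun h : ℝ => d * h) (nhdsWithin 0 (Ioi 0)) (nhdsWithin 0 (Ioi 0)) := by
    intro d hd
    apply tendsto_nhdsWithin_of_tendsto_nhds_of_eventually_within
    · have : Tendsto (fun h : ℝ => d * h) (nhds 0) (nhds (d * 0)) :=
        (continuous_const.mul continuous_id).tendsto 0
      simpa using this.mono_left nhdsWithin_le_nhds
    · filter_upwards [self_mem_nhdsWithin] with h hh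
      exact mul_pos hd hh
  apply le_antisymm
  · exact (key c hc)
  · have h2 := key c⁻¹ (by positivity)
    calc nhdsWithin (0:ℝ) (Ioi 0)
        = Filter.map (fun h : ℝ => c * h) (Filter.map (fun h : ℝ => c⁻¹ * h) (nhdsWithin 0 (Ioi 0))) := by
          rw [Filter.map_map]
          have : ((fun h : ℝ => c * h) ∘ fun h : ℝ => c⁻¹ * h) = id := by
            funext h; simp [Function.comp, ← mul_assoc, mul_inv_cancel₀ hc.ne']
          rw [this, Filter.map_id]
      _ ≤ Filter.map (fun h : ℝ => c * h) (nhdsWithin 0 (Ioi 0)) := Filter.map_mono h2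

open Pointwise in
lemma diniV_smul {n : ℕ} (f : (Fin n → ℝ) → ℝ) (x u : Fin n → ℝ) {c : ℝ} (hc : 0 < c) :
    diniV f x (c • u) = c * diniV f x u := by
  unfold diniV
  set g : ℝ → ℝ := fun h => (f (x + h • u) - f x) / h with hg
  have hcongr : (fun h : ℝ => (f (x + h • (c • u)) - f x) / h)
      =ᶠ[nhdsWithin 0 (Ioi 0)] (fun h : ℝ => c * g (c * h)) := by
    filter_upwards [self_mem_nhdsWithin] with h hh
    have hh0 : (0:ℝ) < h := hh
    have : h • (c • u) = (c * h) • u := by rw [smul_smul, mul_comm]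
    rw [this, hg]
    field_simp
  rw [liminf_congr hcongr, liminf_eq, liminf_eq]
  have key : ∀ b : ℝ, (∀ᶠ h in nhdsWithin (0:ℝ) (Ioi 0), b ≤ g (c * h))
      ↔ (∀ᶠ h in nhdsWithin (0:ℝ) (Ioi 0), b ≤ g h) := by
    intro b
    rw [show (∀ᶠ h in nhdsWithin (0:ℝ) (Ioi 0), b ≤ g (c * h))
        ↔ ∀ᶠ h in Filter.map (fun h : ℝ => c * h) (nhdsWithin 0 (Ioi 0)), b ≤ g h
      from eventually_map.symm, map_const_mul_nhdsGT hc]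
  have hset : {a : ℝ | ∀ᶠ h in nhdsWithin 0 (Ioi 0), a ≤ c * g (c * h)}
      = c • {a : ℝ | ∀ᶠ h in nhdsWithin 0 (Ioi 0), a ≤ g h} := by
    ext a
    simp only [mem_setOf_eq, Set.mem_smul_set, smul_eq_mul]
    constructor
    · intro ha
      refine ⟨a / c, (key (a / c)).1 ?_, by field_simp⟩
      filter_upwards [ha] with h hh
      rw [div_le_iff₀ hc]
      nlinarith [hh]
    · rintro ⟨b, hb, rfl⟩
      filter_upwards [(key b).2 hb] with h hh
      nlinarith [hh]
  rw [hset]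
  have := Real.sSup_smul_of_nonneg hc.le {a : ℝ | ∀ᶠ h in nhdsWithin (0:ℝ) (Ioi 0), a ≤ g h}
  rw [this]; rfl

lemma descent {n : ℕ} {f : (Fin n → ℝ) → ℝ} {x u : Fin n → ℝ}
    (h : diniV f x u < 0) {δ : ℝ} (hδ : 0 < δ) :
    ∃ t ∈ Ioo (0:ℝ) δ, f (x + t • u) < f x := by
  have hfreq := frequently_neg_of_liminf_neg h
  have hev : ∀ᶠ t in nhdsWithin (0:ℝ) (Ioi 0), t ∈ Ioo (0:ℝ) δ :=
    Ioo_mem_nhdsGT hδ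
  obtain ⟨t, ht1, ht2⟩ := (hfreq.and_eventually hev).exists
  refine ⟨t, ht2, ?_⟩
  have := div_neg_iff.1 ht1
  rcases this with ⟨h1, h2⟩ | ⟨h1, h2⟩
  · linarith [ht2.1]
  · linarith

lemma lsc_min_on_Icc {φ : ℝ → ℝ} {a b : ℝ} (hab : a ≤ b)
    (hlsc : LowerSemicontinuousOn φ (Icc a b)) :
    ∃ s ∈ Icc a b, ∀ t ∈ Icc a b, φ s ≤ φ t := by
  set K := Icc a b with hK
  have hKc : IsCompact K := isCompact_Icc
  have hKcl : IsClosed K := isClosed_Icc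
  -- sublevel sets are closed
  have hclosed : ∀ c : ℝ, IsClosed {t ∈ K | φ t ≤ c} := by
    intro c
    rw [← isOpen_compl_iff]
    rw [isOpen_iff_mem_nhds]
    intro t ht
    by_cases htK : t ∈ K
    · have hφ : c < φ t := by
        by_contra hcon
        exact ht ⟨htK, le_of_not_gt hcon⟩
      have := hlsc t htK c hφ
      rw [eventually_nhdsWithin_iff] at this
      filter_upwards [this] with y hy
      intro ⟨hyK, hyle⟩
      exact absurd (hy hyK) (not_lt.2 hyle)
    · filter_upwards [hKcl.isOpen_compl.mem_nhds htK] with y hy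
      intro ⟨hyK, _⟩
      exact hy hyK
  have hane : a ∈ K := ⟨le_refl a, hab⟩
  set ι := {c : ℝ // ∃ t ∈ K, φ t ≤ c} with hι
  have hιne : Nonempty ι := ⟨⟨φ a, a, hane, le_refl _⟩⟩
  set F : ι → Set ℝ := fun i => {t ∈ K | φ t ≤ i.1} with hF
  have hFn : ∀ i, (F i).Nonempty := fun ⟨c, t, htK, htc⟩ => ⟨t, htK, htc⟩
  have hFcl : ∀ i, IsClosed (F i) := fun i => hclosed i.1
  have hFc : ∀ i, IsCompact (F i) := fun i =>
    hKc.of_isClosed_subset (hFcl i) (fun t ht => ht.1)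
  have hdir : Directed (· ⊇ ·) F := by
    rintro ⟨c, tc, htcK, htc⟩ ⟨d, td, htdK, htd⟩
    rcases le_total (φ tc) (φ td) with hcd | hcd
    · exact ⟨⟨min c d, tc, htcK, le_min htc (le_trans hcd htd)⟩,
        fun t ht => ⟨ht.1, le_trans ht.2 (min_le_left _ _)⟩,
        fun t ht => ⟨ht.1, le_trans ht.2 (min_le_right _ _)⟩⟩
    · exact ⟨⟨min c d, td, htdK, le_min (le_trans hcd htc) htd⟩,
        fun t ht => ⟨ht.1, le_trans ht.2 (min_le_left _ _)⟩,
        fun t ht => ⟨ht.1, le_trans ht.2 (min_le_right _ _)⟩⟩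
  obtain ⟨s, hs⟩ := IsCompact.nonempty_iInter_of_directed_nonempty_isCompact_isClosed
    F hdir hFn hFc hFcl
  simp only [mem_iInter] at hs
  have hsK : s ∈ K := (hs hιne.some).1
  refine ⟨s, hsK, fun t htK => ?_⟩
  exact (hs ⟨φ t, t, htK, le_refl _⟩).2

lemma no_bump {φ : ℝ → ℝ} {t₁ t₂ : ℝ} (h12 : t₁ < t₂)
    (hlsc : LowerSemicontinuousOn φ (Icc t₁ t₂))
    (hR : ∀ t ∈ Ico t₁ t₂, ∃ t' ∈ Ioo t t₂, φ t' < φ t)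
    (hL : ∀ t ∈ Ioc t₁ t₂, ∃ t' ∈ Ioo t₁ t, φ t' < φ t) : False := by
  obtain ⟨s, hsK, hmin⟩ := lsc_min_on_Icc h12.le hlsc
  rcases lt_or_eq_of_le hsK.2 with hs2 | hs2
  · obtain ⟨t', ht', hφ⟩ := hR s ⟨hsK.1, hs2⟩
    exact absurd (hmin t' ⟨le_trans hsK.1 ht'.1.le, ht'.2.le⟩) (not_le.2 hφ)
  · obtain ⟨t', ht', hφ⟩ := hL s ⟨by rw [hs2]; exact h12, hsK.2⟩
    exact absurd (hmin t' ⟨ht'.1.le, le_trans ht'.2.le hsK.2⟩) (not_le.2 hφ)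


theorem stmt14 {n : ℕ} (X : Set (Fin n → ℝ)) (hX : Convex ℝ X)
    (f : (Fin n → ℝ) → ℝ) (hlsc : RadiallyLSC f X) (hpc : PseudoconvexOnV f X) :
    StrictPseudoconvexOnV f X ↔
      ¬ ∃ x ∈ X, ∃ y ∈ X, x ≠ y ∧ ∀ t ∈ Icc (0:ℝ) 1, f (x + t • (y - x)) = f x := by
  constructor
  · intro hsp
    rintro ⟨x, hx, y, hy, hxy, hconst⟩
    have hfy : f y = f x := by
      have h1 := hconst 1 ⟨zero_le_one, le_refl 1⟩
      simpa using h1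
    have hd := hsp x hx y hy hxy (le_of_eq hfy)
    have hzero : diniV f x (y - x) = 0 := by
      unfold diniV
      have hev : (fun h : ℝ => (f (x + h • (y - x)) - f x) / h)
          =ᶠ[nhdsWithin (0:ℝ) (Ioi 0)] (fun _ => (0:ℝ)) := by
        filter_upwards [Ioo_mem_nhdsGT one_pos] with h hh
        rw [hconst h ⟨hh.1.le, hh.2.le⟩]
        simp
      rw [liminf_congr hev, liminf_const]
    rw [hzero] at hd
    exact lt_irrefl _ hd
  · intro hnc
    intro x hx y hy hxy hle
    rcases lt_or_eq_of_le hle with hlt | heq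
    · exact hpc x hx y hy hlt
    · -- f y = f x
      set z : ℝ → (Fin n → ℝ) := fun t => x + t • (y - x) with hzdef
      have hz : ∀ t ∈ Icc (0:ℝ) 1, z t ∈ X := by
        intro t ht
        have := hX hx hy (by linarith [ht.2] : (0:ℝ) ≤ 1 - t) ht.1 (by ring)
        convert this using 1
        simp only [hzdef]
        module
      have hz0 : z 0 = x := by simp [hzdef]
      have hz1 : z 1 = y := by simp [hzdef]
      by_cases hbelow : ∃ t ∈ Ioo (0:ℝ) 1, f (z t) < f x
      · obtain ⟨t₀, ht₀, hft₀⟩ := hbelow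
        have hd := hpc x hx (z t₀) (hz t₀ (Ioo_subset_Icc_self ht₀)) hft₀
        have hzx : z t₀ - x = t₀ • (y - x) := by
          simp only [hzdef]; module
        rw [hzx, diniV_smul f x (y - x) ht₀.1] at hd
        by_contra hcon
        push_neg at hcon
        nlinarith [ht₀.1]
      · exfalso
        push_neg at hbelow
        push_neg at hnc
        obtain ⟨ts, htsI, htsne⟩ := hnc x hx y hy hxy
        have hM : ∀ t ∈ Icc (0:ℝ) 1, f x ≤ f (z t) := by
          intro t ht
          rcases eq_or_lt_of_le ht.1 with h0 | h0
          · rw [← h0, hz0]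
          rcases eq_or_lt_of_le ht.2 with h1 | h1
          · rw [h1, hz1, heq]
          · exact hbelow t ⟨h0, h1⟩
        have htsgt : f x < f (z ts) := lt_of_le_of_ne (hM ts htsI) (Ne.symm htsne)
        have hts0 : (0:ℝ) < ts := by
          rcases eq_or_lt_of_le htsI.1 with h0 | h0
          · exfalso; rw [← h0, hz0] at htsgt; exact lt_irrefl _ htsgt
          · exact h0
        have hts1 : ts < 1 := by
          rcases eq_or_lt_of_le htsI.2 with h1 | h1
          · exfalso; rw [h1, hz1, heq] at htsgt; exact lt_irrefl _ htsgt
          · exact h1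
        have hlscφ := hlsc x hx y hy
        have hev := hlscφ ts htsI (f x) htsgt
        rw [eventually_nhdsWithin_iff] at hev
        rw [Metric.eventually_nhds_iff] at hev
        obtain ⟨ε, hε, hball⟩ := hev
        set ε₀ : ℝ := min ε (min ts (1 - ts)) with hε₀def
        have hε₀ : 0 < ε₀ := lt_min hε (lt_min hts0 (by linarith))
        set t₁ : ℝ := ts - ε₀ / 2 with ht₁def
        set t₂ : ℝ := ts + ε₀ / 2 with ht₂def
        have h12 : t₁ < t₂ := by simp only [ht₁def, ht₂def]; linarith
        have hsub : ∀ t ∈ Icc t₁ t₂, t ∈ Ioo (0:ℝ) 1 ∧ f x < f (z t) := by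
          intro t ht
          have hd1 : dist t ts < ε := by
            rw [Real.dist_eq, abs_lt]
            have e1 : ε₀ ≤ ε := min_le_left _ _
            have ha := ht.1
            have hb := ht.2
            simp only [ht₁def, ht₂def] at ha hb
            constructor
            · linarith
            · linarith
          have e2 : ε₀ ≤ ts := le_trans (min_le_right _ _) (min_le_left _ _)
          have e3 : ε₀ ≤ 1 - ts := le_trans (min_le_right _ _) (min_le_right _ _)
          have ht0 : 0 < t := by
            have := ht.1; simp only [ht₁def] at this; linarith
          have ht1' : t < 1 := by
            have := ht.2; simp only [ht₂def] at this; linarith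
          exact ⟨⟨ht0, ht1'⟩, hball hd1 ⟨ht0.le, ht1'.le⟩⟩
        have hIccsub : Icc t₁ t₂ ⊆ Icc (0:ℝ) 1 := by
          intro t ht
          have := (hsub t ht).1
          exact ⟨this.1.le, this.2.le⟩
        apply no_bump (φ := fun t => f (z t)) h12 (hlscφ.mono hIccsub)
        · -- rightward descent
          intro t ht
          have htm : t ∈ Icc t₁ t₂ := ⟨ht.1, ht.2.le⟩
          obtain ⟨htIoo, htgt⟩ := hsub t htm
          have hfy2 : f y < f (z t) := by rw [heq]; exact htgt
          have hd := hpc (z t) (hz t ⟨htIoo.1.le, htIoo.2.le⟩) y hy hfy2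
          have hδpos : 0 < (t₂ - t) / (1 - t) := by
            apply div_pos (by linarith [ht.2]) (by linarith [htIoo.2])
          obtain ⟨h, hhI, hhlt⟩ := descent hd hδpos
          refine ⟨t + h * (1 - t), ⟨?_, ?_⟩, ?_⟩
          · nlinarith [hhI.1, htIoo.2]
          · have := hhI.2
            rw [lt_div_iff₀ (by linarith [htIoo.2] : (0:ℝ) < 1 - t)] at this
            linarith
          · have heqz : z t + h • (y - z t) = z (t + h * (1 - t)) := by
              simp only [hzdef]
              have : y = x + (1:ℝ) • (y - x) := by module
              rw [this]
              module
            rw [← heqz]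
            exact hhlt
        · -- leftward descent
          intro t ht
          have htm : t ∈ Icc t₁ t₂ := ⟨ht.1.le, ht.2⟩
          obtain ⟨htIoo, htgt⟩ := hsub t htm
          have hd := hpc (z t) (hz t ⟨htIoo.1.le, htIoo.2.le⟩) x hx htgt
          have hδpos : 0 < (t - t₁) / t := div_pos (by linarith [ht.1]) htIoo.1
          obtain ⟨h, hhI, hhlt⟩ := descent hd hδpos
          refine ⟨t - h * t, ⟨?_, ?_⟩, ?_⟩
          · have := hhI.2
            rw [lt_div_iff₀ htIoo.1] at this
            linarith
          · nlinarith [hhI.1, htIoo.1]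
          · have heqz : z t + h • (x - z t) = z (t - h * t) := by
              simp only [hzdef]
              module
            rw [← heqz]
            -- hhlt : f (z t + h • (x - z t)) < f (z t)
            exact hhlt
end

section
/- Let φ : I → R be a lower semicontinuous function on an interval I ⊆ R that is pseudoconvex with respect to the lower Dini derivative, and suppose s₁ < b < s₂ are points of I such that φ(t) > φ(a) for all t ∈ (s₁, s₂) for some a ∈ I with a < b and φ(a) < φ(b). Then φ is strictly monotone increasing on (s₁, s₂). -/
open Filter Set

/-- The set of global minimizers of `φ` over `I`. -/
def ArgminSet (φ : ℝ → ℝ) (I : Set ℝ) : Set ℝ := {t ∈ I | ∀ s ∈ I, φ t ≤ φ s}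

/-- If the lower Dini derivative is negative, there exist arbitrarily small steps
that strictly decrease the value. -/
lemma descent_s15 {φ : ℝ → ℝ} {s u : ℝ} (hd : dini φ s u < 0) {ε : ℝ} (hε : 0 < ε) :
    ∃ h ∈ Ioo (0:ℝ) ε, φ (s + h * u) < φ s := by
  set f : ℝ → ℝ := fun h => (φ (s + h * u) - φ s) / h with hf
  have hfreq : ∃ᶠ h in nhdsWithin (0:ℝ) (Ioi 0), f h < 0 := by
    by_contra hc
    have hev : ∀ᶠ h in nhdsWithin (0:ℝ) (Ioi 0), 0 ≤ f h := by
      simpa [not_frequently, not_lt] using hc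
    have h0mem : (0:ℝ) ∈ {a : ℝ | ∀ᶠ h in nhdsWithin (0:ℝ) (Ioi 0), a ≤ f h} := hev
    have hge : (0:ℝ) ≤ dini φ s u := by
      rw [dini, liminf_eq]
      by_cases hbdd : BddAbove {a : ℝ | ∀ᶠ h in nhdsWithin (0:ℝ) (Ioi 0), a ≤ f h}
      · exact le_csSup hbdd h0mem
      · rw [csSup_of_not_bddAbove hbdd, Real.sSup_empty]
    linarith
  have hIoo : Ioo (0:ℝ) ε ∈ nhdsWithin (0:ℝ) (Ioi 0) :=
    Ioo_mem_nhdsGT_of_mem ⟨le_refl 0, hε⟩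
  obtain ⟨h, hlt, hmem⟩ :=
    (hfreq.and_eventually (eventually_of_mem hIoo fun h hh => hh)).exists
  refine ⟨h, hmem, ?_⟩
  have hpos : 0 < h := hmem.1
  have hneg : φ (s + h * u) - φ s < 0 := by
    rcases div_neg_iff.mp hlt with ⟨h1, h2⟩ | ⟨h1, h2⟩
    · linarith
    · exact h1
  linarith

/-- A lower semicontinuous function on a compact interval attains its minimum. -/
lemma lsc_exists_min {φ : ℝ → ℝ} {x y : ℝ} (hxy : x ≤ y)
    (hlsc : LowerSemicontinuousOn φ (Icc x y)) :
    ∃ w ∈ Icc x y, ∀ t ∈ Icc x y, φ w ≤ φ t := by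
  by_contra hc
  push_neg at hc
  have hc' : ∀ w : ℝ, ∃ t, w ∈ Icc x y → t ∈ Icc x y ∧ φ t < φ w := by
    intro w
    by_cases hw : w ∈ Icc x y
    · obtain ⟨t, h1, h2⟩ := hc w hw
      exact ⟨t, fun _ => ⟨h1, h2⟩⟩
    · exact ⟨0, fun h => absurd h hw⟩
  choose t ht using hc'
  have hU : ∀ w : ℝ, ∃ U : Set ℝ, w ∈ Icc x y →
      U ∈ nhds w ∧ ∀ z ∈ U ∩ Icc x y, φ (t w) < φ z := by
    intro w
    by_cases hw : w ∈ Icc x y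
    · have hlt : φ (t w) < φ w := (ht w hw).2
      have := hlsc w hw (φ (t w)) hlt
      rw [eventually_iff, mem_nhdsWithin] at this
      obtain ⟨U, hUo, hwU, hUsub⟩ := this
      exact ⟨U, fun _ => ⟨hUo.mem_nhds hwU, fun z hz => hUsub hz⟩⟩
    · exact ⟨univ, fun h => absurd h hw⟩
  choose U hUmem using hU
  obtain ⟨F, hFmem, hFcov⟩ := (isCompact_Icc (a := x) (b := y)).elim_nhds_subcover U
    (fun w hw => (hUmem w hw).1)
  -- x belongs to the cover, so F is nonempty
  have hxmem : x ∈ ⋃ w ∈ F, U w := hFcov ⟨le_refl x, hxy⟩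
  obtain ⟨w₁, hw₁F, _⟩ := mem_iUnion₂.mp hxmem
  obtain ⟨i₀, hi₀F, hi₀min⟩ := F.exists_min_image (fun w => φ (t w)) ⟨w₁, hw₁F⟩
  have hti₀ : t i₀ ∈ Icc x y := (ht i₀ (hFmem i₀ hi₀F)).1
  obtain ⟨j, hjF, hjU⟩ := mem_iUnion₂.mp (hFcov hti₀)
  have h1 : φ (t j) < φ (t i₀) := (hUmem j (hFmem j hjF)).2 (t i₀) ⟨hjU, hti₀⟩
  have h2 : φ (t i₀) ≤ φ (t j) := hi₀min j hjF
  linarith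

theorem stmt15 (I : Set ℝ) (hI : I.OrdConnected) (φ : ℝ → ℝ)
    (hlsc : LowerSemicontinuousOn φ I) (hpc : PseudoconvexOn φ I)
    (s₁ b s₂ a : ℝ) (hs₁ : s₁ ∈ I) (hb : b ∈ I) (hs₂ : s₂ ∈ I) (ha : a ∈ I)
    (h₁ : s₁ < b) (h₂ : b < s₂) (hab : a < b) (hφab : φ a < φ b)
    (hbig : ∀ t ∈ Ioo s₁ s₂, φ a < φ t) :
    StrictMonoOn φ (Ioo s₁ s₂) := by
  have hIcc : Icc s₁ s₂ ⊆ I := hI.out hs₁ hs₂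
  have haS : a ≤ s₁ := by
    by_contra h
    push_neg at h
    exact absurd (hbig a ⟨h, lt_trans hab h₂⟩) (lt_irrefl _)
  intro x hx y hy hxy
  by_contra hyx
  push_neg at hyx
  have hsub : Icc x y ⊆ Ioo s₁ s₂ := fun z hz =>
    ⟨lt_of_lt_of_le hx.1 hz.1, lt_of_le_of_lt hz.2 hy.2⟩
  have hsubI : Icc x y ⊆ I := fun z hz => hIcc (Ioo_subset_Icc_self (hsub hz))
  obtain ⟨w₀, hw₀, hw₀min⟩ := lsc_exists_min (le_of_lt hxy) (hlsc.mono hsubI)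
  obtain ⟨w, hwmem, hxw, hwmin⟩ :
      ∃ w ∈ Icc x y, x < w ∧ ∀ t ∈ Icc x y, φ w ≤ φ t := by
    by_cases hy' : φ y ≤ φ w₀
    · exact ⟨y, ⟨le_of_lt hxy, le_refl y⟩, hxy,
        fun t htm => le_trans hy' (hw₀min t htm)⟩
    · push_neg at hy'
      refine ⟨w₀, hw₀, ?_, hw₀min⟩
      rcases eq_or_lt_of_le hw₀.1 with h | h
      · exfalso; rw [← h] at hy'; linarith
      · exact h
  have hwI : w ∈ I := hsubI hwmem
  have hφaw : φ a < φ w := hbig w (hsub hwmem)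
  have hd : dini φ w (a - w) < 0 := hpc w hwI a ha hφaw
  have haw : a < w := lt_of_le_of_lt haS (lt_trans hx.1 (lt_of_lt_of_le hxw (le_refl w)))
  have hε : 0 < (w - x) / (w - a) := div_pos (by linarith) (by linarith)
  obtain ⟨h, ⟨hh0, hhε⟩, hdec⟩ := descent_s15 hd hε
  set z := w + h * (a - w) with hz
  have hzw : z < w := by nlinarith
  have hxz : x < z := by
    have hlt : h * (w - a) < w - x := (lt_div_iff₀ (by linarith)).mp hhε
    nlinarith
  have hzmem : z ∈ Icc x y := ⟨le_of_lt hxz, le_trans (le_of_lt hzw) hwmem.2⟩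
  exact absurd hdec (not_lt.mpr (hwmin z hzmem))
end

section
/- Let φ : I → R be a lower semicontinuous function on an interval I ⊆ R that is pseudoconvex with respect to the lower Dini derivative, and suppose φ has no global minimizer on I. If there exist t₀ > t₁ in I with φ(t₀) > φ(t₁), then φ is strictly monotone increasing on all of I. -/
open Filter Set

open Topology

lemma descent_s17 {I : Set ℝ} {φ : ℝ → ℝ} (hpc : PseudoconvexOn φ I) {s t : ℝ}
    (hs : s ∈ I) (ht : t ∈ I) (hlt : φ t < φ s) {δ : ℝ} (hδ : 0 < δ) :
    ∃ h ∈ Ioo (0:ℝ) δ, φ (s + h * (t - s)) < φ s := by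
  have hd := hpc s hs t ht hlt
  rw [dini] at hd
  have hfreq : ∃ᶠ h in 𝓝[>] (0:ℝ), (φ (s + h * (t - s)) - φ s) / h < 0 := by
    by_contra hc
    rw [not_frequently] at hc
    have hev : ∀ᶠ h in 𝓝[>] (0:ℝ), (0:ℝ) ≤ (φ (s + h * (t - s)) - φ s) / h := by
      filter_upwards [hc] with x hx
      exact not_lt.mp hx
    have h0 : (0:ℝ) ∈ {a : ℝ | ∀ᶠ h in 𝓝[>] (0:ℝ), a ≤ (φ (s + h * (t - s)) - φ s) / h} := hev
    rw [liminf_eq] at hd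
    by_cases hbdd : BddAbove {a : ℝ | ∀ᶠ h in 𝓝[>] (0:ℝ), a ≤ (φ (s + h * (t - s)) - φ s) / h}
    · exact absurd hd (not_lt.mpr (le_csSup hbdd h0))
    · rw [Real.sSup_of_not_bddAbove hbdd] at hd
      exact lt_irrefl _ hd
  have hmem : Ioo (0:ℝ) δ ∈ 𝓝[>] (0:ℝ) := Ioo_mem_nhdsGT hδ
  obtain ⟨h, hh1, hh2⟩ := (hfreq.and_eventually (eventually_of_mem hmem (fun x hx => hx))).exists
  refine ⟨h, hh2, ?_⟩
  have := (div_neg_iff.mp hh1)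
  rcases this with ⟨h1, h2⟩ | ⟨h1, h2⟩
  · linarith [hh2.1]
  · linarith

lemma lsc_min {I K : Set ℝ} {φ : ℝ → ℝ} (hlsc : LowerSemicontinuousOn φ I)
    (hK : IsCompact K) (hne : K.Nonempty) (hKI : K ⊆ I) :
    ∃ p ∈ K, ∀ x ∈ K, φ p ≤ φ x := by
  by_contra hcon
  push_neg at hcon
  choose! x hxK hxlt using hcon
  have hU : ∀ p ∈ K, ∃ U : Set ℝ, IsOpen U ∧ p ∈ U ∧ U ∩ I ⊆ {y | φ (x p) < φ y} := by
    intro p hp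
    exact mem_nhdsWithin.mp (hlsc p (hKI hp) (φ (x p)) (hxlt p hp))
  choose! U hUo hpU hUsub using hU
  obtain ⟨t, htK, htcov⟩ := hK.elim_nhds_subcover U
    (fun p hp => (hUo p hp).mem_nhds (hpU p hp))
  have htne : t.Nonempty := by
    obtain ⟨q, hq⟩ := hne
    have := htcov hq
    simp only [Set.mem_iUnion] at this
    obtain ⟨p, hp, _⟩ := this
    exact ⟨p, hp⟩
  obtain ⟨p, hpt, hpmin⟩ := t.exists_min_image (fun p => φ (x p)) htne
  have hxpK : x p ∈ K := hxK p (htK p hpt)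
  have := htcov hxpK
  simp only [Set.mem_iUnion] at this
  obtain ⟨q, hqt, hxpq⟩ := this
  have h1 : φ (x q) < φ (x p) := hUsub q (htK q hqt) ⟨hxpq, hKI hxpK⟩
  exact absurd (hpmin q hqt) (not_le.mpr h1)

lemma quasi {I : Set ℝ} {φ : ℝ → ℝ} (hI : I.OrdConnected)
    (hlsc : LowerSemicontinuousOn φ I) (hpc : PseudoconvexOn φ I)
    {x y z : ℝ} (hx : x ∈ I) (hy : y ∈ I) (hz : z ∈ I) (hxy : x < y) (hyz : y < z) :
    φ y ≤ max (φ x) (φ z) := by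
  by_contra hcon
  push_neg at hcon
  set c := max (φ x) (φ z) with hc
  have hIxz : Icc x z ⊆ I := hI.out hx hz
  -- left threshold r
  set S : Set ℝ := {t | t ∈ Icc x y ∧ φ t ≤ c} with hS
  have hxS : x ∈ S := ⟨⟨le_refl _, hxy.le⟩, le_max_left _ _⟩
  have hSne : S.Nonempty := ⟨x, hxS⟩
  have hSbdd : BddAbove S := ⟨y, fun t ht => ht.1.2⟩
  set r := sSup S with hr
  have hrmem : r ∈ Icc x y := ⟨le_csSup hSbdd hxS, csSup_le hSne fun t ht => ht.1.2⟩
  have hrI : r ∈ I := hIxz ⟨hrmem.1, hrmem.2.trans hyz.le⟩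
  have hφr : φ r ≤ c := by
    by_contra h'
    push_neg at h'
    have hev := hlsc r hrI c h'
    have hclos : r ∈ closure S := csSup_mem_closure hSne hSbdd
    have hneb : (𝓝[S] r).NeBot := mem_closure_iff_nhdsWithin_neBot.mp hclos
    have hle : 𝓝[S] r ≤ 𝓝[I] r :=
      nhdsWithin_mono r fun t ht => hIxz ⟨ht.1.1, ht.1.2.trans hyz.le⟩
    have hev2 : ∀ᶠ t in 𝓝[S] r, c < φ t := hle hev
    obtain ⟨t, htgt, htS⟩ := (hev2.and eventually_mem_nhdsWithin).exists
    exact absurd htS.2 (not_le.mpr htgt)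
  have hry : r < y := by
    rcases lt_or_eq_of_le hrmem.2 with h1 | h1
    · exact h1
    · rw [h1] at hφr; exact absurd hφr (not_le.mpr hcon)
  have hgtL : ∀ t, r < t → t ≤ y → c < φ t := by
    intro t h1 h2
    by_contra h3
    push_neg at h3
    exact absurd (le_csSup hSbdd ⟨⟨(hrmem.1.trans_lt h1).le, h2⟩, h3⟩) (not_le.mpr h1)
  -- right threshold r'
  set S' : Set ℝ := {t | t ∈ Icc y z ∧ φ t ≤ c} with hS'
  have hzS' : z ∈ S' := ⟨⟨hyz.le, le_refl _⟩, le_max_right _ _⟩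
  have hS'ne : S'.Nonempty := ⟨z, hzS'⟩
  have hS'bdd : BddBelow S' := ⟨y, fun t ht => ht.1.1⟩
  set r' := sInf S' with hr'
  have hr'mem : r' ∈ Icc y z := ⟨le_csInf hS'ne fun t ht => ht.1.1, csInf_le hS'bdd hzS'⟩
  have hr'I : r' ∈ I := hIxz ⟨hxy.le.trans hr'mem.1, hr'mem.2⟩
  have hφr' : φ r' ≤ c := by
    by_contra h'
    push_neg at h'
    have hev := hlsc r' hr'I c h'
    have hclos : r' ∈ closure S' := csInf_mem_closure hS'ne hS'bdd
    have hneb : (𝓝[S'] r').NeBot := mem_closure_iff_nhdsWithin_neBot.mp hclos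
    have hle : 𝓝[S'] r' ≤ 𝓝[I] r' :=
      nhdsWithin_mono r' fun t ht => hIxz ⟨hxy.le.trans ht.1.1, ht.1.2⟩
    have hev2 : ∀ᶠ t in 𝓝[S'] r', c < φ t := hle hev
    obtain ⟨t, htgt, htS⟩ := (hev2.and eventually_mem_nhdsWithin).exists
    exact absurd htS.2 (not_le.mpr htgt)
  have hyr' : y < r' := by
    rcases lt_or_eq_of_le hr'mem.1 with h1 | h1
    · exact h1
    · rw [← h1] at hφr'; exact absurd hφr' (not_le.mpr hcon)
  have hgtR : ∀ t, y ≤ t → t < r' → c < φ t := by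
    intro t h1 h2
    by_contra h3
    push_neg at h3
    exact absurd (csInf_le hS'bdd ⟨⟨h1, h2.le.trans hr'mem.2⟩, h3⟩) (not_le.mpr h2)
  -- midpoints
  set u := (r + y) / 2 with hu
  set v := (y + r') / 2 with hv
  have hru : r < u := by simp [hu]; linarith
  have huy : u < y := by simp [hu]; linarith
  have hyv : y < v := by simp [hv]; linarith
  have hvr' : v < r' := by simp [hv]; linarith
  have huvI : Icc u v ⊆ I := fun t ht =>
    hIxz ⟨hrmem.1.trans (hru.le.trans ht.1), ht.2.trans (hvr'.le.trans hr'mem.2)⟩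
  have hgtuv : ∀ t ∈ Icc u v, c < φ t := by
    intro t ht
    rcases le_or_gt t y with h1 | h1
    · exact hgtL t (hru.trans_le ht.1) h1
    · exact hgtR t h1.le (ht.2.trans_lt hvr')
  obtain ⟨p, hpK, hpmin⟩ := lsc_min hlsc isCompact_Icc
    (nonempty_Icc.mpr (huy.le.trans hyv.le)) huvI
  rcases lt_or_eq_of_le hpK.2 with hpv | hpv
  · -- p < v : descend toward r'
    have hpr' : p < r' := hpv.trans hvr'
    have hδ : 0 < (v - p) / (r' - p) := div_pos (by linarith) (by linarith)
    obtain ⟨h, hh, hlt⟩ := descent_s17 hpc (huvI hpK) hr'I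
      ((hφr'.trans_lt (hgtuv p hpK)) : φ r' < φ p) hδ
    have hw1 : p < p + h * (r' - p) := by nlinarith [hh.1]
    have hw2 : p + h * (r' - p) < v := by
      have := (lt_div_iff₀ (by linarith : (0:ℝ) < r' - p)).mp hh.2
      nlinarith [hh.1]
    exact absurd (hpmin _ ⟨hpK.1.trans hw1.le, hw2.le⟩) (not_le.mpr hlt)
  · -- p = v : descend toward r
    have hrp : r < p := by rw [← hpv] at *; exact hru.trans_le hpK.1
    have hup : u < p := hpv ▸ (huy.trans hyv)
    have hδ : 0 < (p - u) / (p - r) := div_pos (by linarith) (by linarith)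
    obtain ⟨h, hh, hlt⟩ := descent_s17 hpc (huvI hpK) hrI
      ((hφr.trans_lt (hgtuv p hpK)) : φ r < φ p) hδ
    have hw2 : p + h * (r - p) < p := by nlinarith [hh.1]
    have hw1 : u < p + h * (r - p) := by
      have := (lt_div_iff₀ (by linarith : (0:ℝ) < p - r)).mp hh.2
      nlinarith [hh.1]
    exact absurd (hpmin _ ⟨hw1.le, hw2.le.trans hpK.2⟩) (not_le.mpr hlt)

lemma weak_mono {I : Set ℝ} {φ : ℝ → ℝ} (hI : I.OrdConnected)
    (hlsc : LowerSemicontinuousOn φ I) (hpc : PseudoconvexOn φ I)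
    (hnomin : ∀ t ∈ I, ∃ s ∈ I, φ s < φ t)
    {t₀ t₁ : ℝ} (ht₀ : t₀ ∈ I) (ht₁ : t₁ ∈ I) (h : t₁ < t₀) (hφ : φ t₁ < φ t₀)
    {a b : ℝ} (ha : a ∈ I) (hb : b ∈ I) (hab : a < b) : φ a ≤ φ b := by
  by_contra hcon
  push_neg at hcon
  set L := min t₁ a with hL
  set R := max t₀ b with hR
  have hLI : L ∈ I := by rcases min_cases t₁ a with ⟨e, _⟩ | ⟨e, _⟩ <;> rw [hL, e] <;> assumption
  have hRI : R ∈ I := by rcases max_cases t₀ b with ⟨e, _⟩ | ⟨e, _⟩ <;> rw [hR, e] <;> assumption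
  have hsub : Icc L R ⊆ I := hI.out hLI hRI
  have hLR : L ≤ R := le_trans (min_le_right _ _) (le_trans hab.le (le_max_right _ _))
  obtain ⟨m, hmK, hmmin⟩ := lsc_min hlsc isCompact_Icc (nonempty_Icc.mpr hLR) hsub
  obtain ⟨s, hsI, hslt⟩ := hnomin m (hsub hmK)
  have hsout : s ∉ Icc L R := fun hs => absurd (hmmin s hs) (not_le.mpr hslt)
  rw [mem_Icc, not_and_or] at hsout
  have haK : a ∈ Icc L R := ⟨min_le_right _ _, hab.le.trans (le_max_right _ _)⟩
  have ht₀K : t₀ ∈ Icc L R := ⟨(min_le_left _ _).trans h.le, le_max_left _ _⟩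
  rcases hsout with hs | hs
  · push_neg at hs
    have hsa : s < a := hs.trans_le (min_le_right _ _)
    have hq := quasi hI hlsc hpc hsI ha hb hsa hab
    have : φ s < φ a := hslt.trans_le (hmmin a haK)
    rcases max_cases (φ s) (φ b) with ⟨e, _⟩ | ⟨e, _⟩ <;> rw [e] at hq <;> linarith
  · push_neg at hs
    have hts : t₀ < s := (le_max_left _ _).trans_lt hs
    have hq := quasi hI hlsc hpc ht₁ ht₀ hsI h hts
    have : φ s < φ t₀ := hslt.trans_le (hmmin t₀ ht₀K)
    rcases max_cases (φ t₁) (φ s) with ⟨e, _⟩ | ⟨e, _⟩ <;> rw [e] at hq <;> linarith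

theorem stmt17 (I : Set ℝ) (hI : I.OrdConnected) (φ : ℝ → ℝ)
    (hlsc : LowerSemicontinuousOn φ I) (hpc : PseudoconvexOn φ I)
    (hnomin : ∀ t ∈ I, ∃ s ∈ I, φ s < φ t)
    (t₀ t₁ : ℝ) (ht₀ : t₀ ∈ I) (ht₁ : t₁ ∈ I) (h : t₁ < t₀) (hφ : φ t₁ < φ t₀) :
    StrictMonoOn φ I := by
  intro a ha b hb hab
  have hweak := weak_mono hI hlsc hpc hnomin ht₀ ht₁ h hφ ha hb hab
  rcases lt_or_eq_of_le hweak with h1 | h1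
  · exact h1
  exfalso
  obtain ⟨s, hsI, hslt⟩ := hnomin a ha
  have hsa : s < a := by
    rcases lt_trichotomy s a with h2 | h2 | h2
    · exact h2
    · rw [h2] at hslt; exact absurd hslt (lt_irrefl _)
    · exact absurd (weak_mono hI hlsc hpc hnomin ht₀ ht₁ h hφ ha hsI h2) (not_le.mpr hslt)
  have hδ : 0 < (b - a) / (b - s) := div_pos (by linarith) (by linarith)
  obtain ⟨k, hk, hlt⟩ := descent_s17 hpc hb hsI (by rw [← h1]; exact hslt) hδ
  set w := b + k * (s - b) with hw
  have hw2 : w < b := by nlinarith [hk.1]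
  have hw1 : a < w := by
    have := (lt_div_iff₀ (by linarith : (0:ℝ) < b - s)).mp hk.2
    nlinarith [hk.1]
  have hwI : w ∈ I := hI.out ha hb ⟨hw1.le, hw2.le⟩
  have := weak_mono hI hlsc hpc hnomin ht₀ ht₁ h hφ ha hwI hw1
  rw [h1] at this
  exact absurd hlt (not_lt.mpr this)
end

section
/- Let φ : I → R be a lower semicontinuous function on an interval I ⊆ R. Suppose the set Î of global minimizers of φ is an interval (possibly empty) on which φ is constant, φ is strictly increasing on I₊ = {t ∈ I : t ≥ s for all s ∈ Î} (or strictly monotone on I if Î = ∅), strictly decreasing on I₋ = {t ∈ I : t ≤ s for all s ∈ Î}, and φ has no stationary points in I \ Î. Then φ is pseudoconvex with respect to the lower Dini derivative. -/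
open Filter Set

private lemma ev_scale {c : ℝ} (hc : 0 < c) {P : ℝ → Prop}
    (h : ∀ᶠ k in nhdsWithin 0 (Ioi 0), P k) :
    ∀ᶠ k in nhdsWithin 0 (Ioi 0), P (c * k) := by
  rw [eventually_iff, mem_nhdsGT_iff_exists_Ioo_subset] at h ⊢
  obtain ⟨δ, hδ, hsub⟩ := h
  refine ⟨δ / c, div_pos hδ hc, fun x hx => hsub ?_⟩
  exact ⟨mul_pos hc hx.1, by rw [mul_comm]; exact (lt_div_iff₀ hc).1 hx.2⟩

private lemma dini_zero (φ : ℝ → ℝ) (s : ℝ) : dini φ s 0 = 0 := by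
  have h : (fun h : ℝ => (φ (s + h * 0) - φ s) / h) = fun _ : ℝ => (0:ℝ) := by
    funext h; simp
  rw [dini, h, liminf_const]

private lemma exists_neg_of_dini_neg {φ : ℝ → ℝ} {s u : ℝ}
    (h : dini φ s u < 0) : ∃ᶠ k in nhdsWithin 0 (Ioi 0), φ (s + k * u) < φ s := by
  by_contra hcon
  rw [not_frequently] at hcon
  have hev : ∀ᶠ k in nhdsWithin 0 (Ioi (0:ℝ)), (0:ℝ) ≤ (φ (s + k * u) - φ s) / k := by
    filter_upwards [hcon, self_mem_nhdsWithin] with k hk hk0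
    exact div_nonneg (sub_nonneg.2 (not_lt.1 hk)) (le_of_lt hk0)
  rw [dini, liminf_eq] at h
  by_cases hbdd : BddAbove {a : ℝ | ∀ᶠ k in nhdsWithin 0 (Ioi (0:ℝ)),
      a ≤ (φ (s + k * u) - φ s) / k}
  · exact absurd (le_csSup hbdd hev) (not_le.2 h)
  · rw [Real.sSup_of_not_bddAbove hbdd] at h
    exact lt_irrefl _ h

private lemma dini_scale_neg {φ : ℝ → ℝ} {s u c : ℝ} (hc : 0 < c)
    (h : dini φ s u < 0) : dini φ s (c * u) < 0 := by
  set f : ℝ → ℝ := fun k => (φ (s + k * u) - φ s) / k with hf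
  set S : Set ℝ := {a | ∀ᶠ k in nhdsWithin 0 (Ioi (0:ℝ)), a ≤ f k} with hS
  have hdf : dini φ s u = sSup S := liminf_eq
  rw [hdf] at h
  have hne : S.Nonempty := by
    by_contra hne
    rw [not_nonempty_iff_eq_empty.1 hne, Real.sSup_empty] at h
    exact lt_irrefl _ h
  have hbdd : BddAbove S := by
    by_contra hbdd
    rw [Real.sSup_of_not_bddAbove hbdd] at h
    exact lt_irrefl _ h
  -- the difference quotient in direction c * u
  have hg : ∀ k : ℝ, (φ (s + k * (c * u)) - φ s) / k = c * f (c * k) := by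
    intro k
    have h1 : s + k * (c * u) = s + (c * k) * u := by ring
    rw [hf, h1]
    rcases eq_or_ne k 0 with rfl | hk
    · simp
    · field_simp
  set S' : Set ℝ := {a | ∀ᶠ k in nhdsWithin 0 (Ioi (0:ℝ)),
      a ≤ (φ (s + k * (c * u)) - φ s) / k} with hS'
  have hd' : dini φ s (c * u) = sSup S' := liminf_eq
  rw [hd']
  have hsub : ∀ a ∈ S', a ≤ c * sSup S := by
    intro a ha
    have h1 : ∀ᶠ k in nhdsWithin 0 (Ioi (0:ℝ)), a / c ≤ f (c * k) := by
      filter_upwards [ha] with k hk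
      rw [hg k] at hk
      exact (div_le_iff₀' hc).2 hk
    have h2 : ∀ᶠ k in nhdsWithin 0 (Ioi (0:ℝ)), a / c ≤ f k := by
      have := ev_scale (inv_pos.2 hc) h1
      filter_upwards [this] with k hk
      rwa [← mul_assoc, mul_inv_cancel₀ (ne_of_gt hc), one_mul] at hk
    have h3 : a / c ≤ sSup S := le_csSup hbdd h2
    calc a = c * (a / c) := by field_simp
    _ ≤ c * sSup S := by exact mul_le_mul_of_nonneg_left h3 hc.le
  have hne' : S'.Nonempty := by
    obtain ⟨a, ha⟩ := hne
    refine ⟨c * a, ?_⟩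
    have := ev_scale hc ha
    filter_upwards [this] with k hk
    rw [hg k]
    exact mul_le_mul_of_nonneg_left hk hc.le
  have hle : sSup S' ≤ c * sSup S := csSup_le hne' hsub
  exact hle.trans_lt (mul_neg_of_pos_of_neg hc h)

theorem stmt19 (I : Set ℝ) (hI : I.OrdConnected) (φ : ℝ → ℝ)
    (hlsc : LowerSemicontinuousOn φ I)
    (hi : (ArgminSet φ I = ∅ ∧ (StrictMonoOn φ I ∨ StrictAntiOn φ I)) ∨
      ((ArgminSet φ I).Nonempty ∧ Convex ℝ (ArgminSet φ I) ∧
        (∀ a ∈ ArgminSet φ I, ∀ b ∈ ArgminSet φ I, φ a = φ b) ∧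
        StrictMonoOn φ {t ∈ I | ∀ s ∈ ArgminSet φ I, s ≤ t} ∧
        StrictAntiOn φ {t ∈ I | ∀ s ∈ ArgminSet φ I, t ≤ s}))
    (hii : ∀ t ∈ I \ ArgminSet φ I, ¬ Stationary φ I t) :
    PseudoconvexOn φ I := by
  intro s hs t ht hts
  have hsnot : s ∉ ArgminSet φ I := by
    rintro ⟨-, hmin⟩
    exact absurd (hmin t ht) (not_le.2 hts)
  have hnstat := hii s ⟨hs, hsnot⟩
  rw [Stationary] at hnstat
  push_neg at hnstat
  obtain ⟨u, hadm, hdu⟩ := hnstat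
  obtain ⟨δ, hδ, hmem⟩ := hadm
  have hevI : ∀ᶠ k in nhdsWithin 0 (Ioi (0:ℝ)), s + k * u ∈ I := by
    filter_upwards [Ioo_mem_nhdsGT_of_mem ⟨le_refl (0:ℝ), hδ⟩] with k hk
    exact hmem k hk
  have hfreq := exists_neg_of_dini_neg hdu
  obtain ⟨k, h1, h2, h3⟩ :=
    (hfreq.and_eventually (hevI.and self_mem_nhdsWithin)).exists
  -- p = s + k * u is a point of I on the side of u with smaller value
  have hu0 : u ≠ 0 := by
    rintro rfl
    rw [dini_zero] at hdu
    exact lt_irrefl _ hdu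
  have hside : (∀ q ∈ I, φ q < φ s → q < s) ∨ (∀ q ∈ I, φ q < φ s → s < q) := by
    rcases hi with ⟨-, hmono | hanti⟩ | ⟨-, hconv, -, hmono, hanti⟩
    · left; intro q hq hq'
      rcases lt_trichotomy q s with h | h | h
      · exact h
      · exact absurd hq' (by rw [h]; exact lt_irrefl _)
      · exact absurd (hmono hs hq h) (not_lt.2 hq'.le)
    · right; intro q hq hq'
      rcases lt_trichotomy q s with h | h | h
      · exact absurd (hanti hq hs h) (not_lt.2 hq'.le)
      · exact absurd hq' (by rw [h]; exact lt_irrefl _)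
      · exact h
    · have hdich : (∀ a ∈ ArgminSet φ I, a ≤ s) ∨ (∀ a ∈ ArgminSet φ I, s ≤ a) := by
        by_contra hcon
        push_neg at hcon
        obtain ⟨⟨a, ha, hsa⟩, ⟨b, hb, hbs⟩⟩ := hcon
        exact hsnot (hconv.ordConnected.out hb ha ⟨hbs.le, hsa.le⟩)
      rcases hdich with hL | hR
      · left; intro q hq hq'
        have hsJ : s ∈ {t ∈ I | ∀ a ∈ ArgminSet φ I, a ≤ t} := ⟨hs, hL⟩
        rcases lt_trichotomy q s with h | h | h
        · exact h
        · exact absurd hq' (by rw [h]; exact lt_irrefl _)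
        · have hqJ : q ∈ {t ∈ I | ∀ a ∈ ArgminSet φ I, a ≤ t} :=
            ⟨hq, fun a ha => (hL a ha).trans h.le⟩
          exact absurd (hmono hsJ hqJ h) (not_lt.2 hq'.le)
      · right; intro q hq hq'
        have hsJ : s ∈ {t ∈ I | ∀ a ∈ ArgminSet φ I, t ≤ a} := ⟨hs, hR⟩
        rcases lt_trichotomy q s with h | h | h
        · have hqJ : q ∈ {t ∈ I | ∀ a ∈ ArgminSet φ I, t ≤ a} :=
            ⟨hq, fun a ha => h.le.trans (hR a ha)⟩
          exact absurd (hanti hqJ hsJ h) (not_lt.2 hq'.le)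
        · exact absurd hq' (by rw [h]; exact lt_irrefl _)
        · exact h
  rcases hside with hL | hR
  · have htls : t < s := hL t ht hts
    have hpls : s + k * u < s := hL _ h2 h1
    have hun : u < 0 := by nlinarith
    have hc : 0 < (t - s) / u := div_pos_of_neg_of_neg (by linarith) hun
    have heq : t - s = ((t - s) / u) * u := (div_mul_cancel₀ _ (ne_of_lt hun)).symm
    rw [heq]
    exact dini_scale_neg hc hdu
  · have htls : s < t := hR t ht hts
    have hpls : s < s + k * u := hR _ h2 h1
    have hun : 0 < u := by nlinarith
    have hc : 0 < (t - s) / u := div_pos (by linarith) hun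
    have heq : t - s = ((t - s) / u) * u := (div_mul_cancel₀ _ (ne_of_gt hun)).symm
    rw [heq]
    exact dini_scale_neg hc hdu
end
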